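/- Let (𝒫,𝓛) be a horizontal shadow representation in general position and let (a,b,q,i,i′) be a BD-instance such that: some BD(a,b,q,i,i′)-solution exists; the set {L_q,L_i,L_{i′}} does not dominate X(a,b); R(a,b) is not contained in S_{L_i}; b ∉ S_{l_{L_i}}; and there exists a minimum-cardinality BD(a,b,q,i,i′)-solution Z₀ such that Z₀ ∖ {L_i} dominates every x ∈ X(a,b) with x ∩ (S_{L_i} ∪ F_{L_i}) ≠ ∅. Call a tuple (c,L_{q′},L_j,L_{j′}) with c ∈ ℝ² and L_{q′},L_j,L_{j′} ∈ 𝓛 admissible if: (1) L_{q′} ∈ (𝓛^right_q ∩ 𝓛^left_{i,i′}) ∖ {L_i}; (2) (L_j,L_{j′}) is a right-crossing pair with L_j,L_{j′} ∈ (𝓛^right_q ∩ 𝓛^left_{i,i′}) ∖ {L_i}, and L_{j′} = L_{i′} whenever L_i ≠ L_{i′}; (3) L_{q′} ∈ 𝓛^left_{j,j′} and L_j,L_{j′} ∈ 𝓛^right_{q′}; (4) c = r_{L_j}∧b if (r_{L_j})₁ ≤ b₁, and c = b otherwise; (5) {L_j,L_{j′}} dominates X(a,b) ∖ X(a,c).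 Then the minimum cardinality of a BD(a,b,q,i,i′)-solution equals the minimum, over all admissible tuples (c,L_{q′},L_j,L_{j′}) for which a BD(a,c,q′,j,j′)-solution exists, of the cardinality of {L_q,L_i} ∪ Z′, where Z′ is any minimum-cardinality BD(a,c,q′,j,j′)-solution. -/

import Mathlib

open Set

abbrev Pt : Type := ℝ × ℝ

/-- The shadow of a point `t`. -/
def ptShadow (t : Pt) : Set Pt := {p : Pt | p.1 ≤ t.1 ∧ p.2 - p.1 ≤ t.2 - t.1}

/-- The shadow of a set of points. -/
def setShadow (L : Set Pt) : Set Pt := ⋃ t ∈ L, ptShadow t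

/-- The reverse shadow of a point `t`. -/
def ptRevShadow (t : Pt) : Set Pt := {p : Pt | t.1 ≤ p.1 ∧ t.2 - t.1 ≤ p.2 - p.1}

/-- The reverse shadow of a set of points. -/
def setRevShadow (L : Set Pt) : Set Pt := ⋃ t ∈ L, ptRevShadow t

/-- The region `A_t`. -/
def regionA (t : Pt) : Set Pt := {p : Pt | t.1 ≤ p.1 ∧ p.2 - p.1 ≤ t.2 - t.1}

/-- The region `B_t`. -/
def regionB (t : Pt) : Set Pt := {p : Pt | p.1 ≤ t.1 ∧ t.2 - t.1 ≤ p.2 - p.1}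

/-- `s ∧ t := (s₁, s₁ + t₂ − t₁)`. -/
def diagMeet (s t : Pt) : Pt := (s.1, s.1 + t.2 - t.1)

/-- A closed horizontal line segment, given by its left and right endpoints. -/
structure HSeg where
  l : Pt
  r : Pt
  horiz : l.2 = r.2
  le : l.1 ≤ r.1

/-- The set of points of a horizontal segment. -/
def HSeg.carrier (L : HSeg) : Set Pt := segment ℝ L.l L.r

/-- An element of a horizontal shadow representation: a point or a segment. -/
inductive Elem where
  | pt : Pt → Elem
  | seg : HSeg → Elem

/-- The set of points of the plane occupied by an element. -/
def Elem.carrier : Elem → Set Pt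
  | .pt p => ({p} : Set Pt)
  | .seg L => L.carrier

/-- Adjacency between elements: two points are never adjacent; a point `p` and a
segment `L` are adjacent iff `p ∈ S_L`; two segments `L, L'` are adjacent iff
`L ∩ S_{L'} ≠ ∅` or `L' ∩ S_L ≠ ∅`. -/
def ElemAdj : Elem → Elem → Prop
  | .pt _, .pt _ => False
  | .pt p, .seg L => p ∈ setShadow L.carrier
  | .seg L, .pt p => p ∈ setShadow L.carrier
  | .seg L, .seg L' =>
      (L.carrier ∩ setShadow L'.carrier).Nonempty ∨ (L'.carrier ∩ setShadow L.carrier).Nonempty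

/-- `x` is dominated by the set `D`: it belongs to `D` or is adjacent to a member of `D`. -/
def DominatedBy (D : Set Elem) (x : Elem) : Prop := x ∈ D ∨ ∃ d ∈ D, ElemAdj x d

/-- `D` dominates `X`. -/
def Dominates (D X : Set Elem) : Prop := ∀ x ∈ X, DominatedBy D x

/-- A horizontal shadow representation: a finite set of points and a finite set of
closed horizontal segments. -/
structure HSR where
  P : Set Pt
  Ls : Set HSeg
  finP : P.Finite
  finL : Ls.Finite

/-- The elements (points and segments) of a representation. -/
def HSR.elems (R : HSR) : Set Elem := (Elem.pt '' R.P) ∪ (Elem.seg '' R.Ls)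

/-- All points of `𝒫` together with all endpoints of segments of `𝓛`. -/
def HSR.keyPts (R : HSR) : Set Pt := R.P ∪ ⋃ L ∈ R.Ls, ({L.l, L.r} : Set Pt)

/-- General position: all points of `𝒫` and all endpoints of segments of `𝓛` have
pairwise distinct first coordinates and pairwise distinct values of
(second coordinate minus first coordinate). -/
def GenPos (R : HSR) : Prop :=
  ∀ s ∈ R.keyPts, ∀ t ∈ R.keyPts, s ≠ t → s.1 ≠ t.1 ∧ s.2 - s.1 ≠ t.2 - t.1

/-- `(L_j, L_{j'})` is a left-crossing pair. -/
def LeftCrossing (Lj Lj' : HSeg) : Prop := Lj.l ∈ ptShadow Lj'.l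

/-- `(L_i, L_{i'})` is a right-crossing pair. -/
def RightCrossing (Li Li' : HSeg) : Prop := Li'.r ∈ ptShadow Li.r

/-- `𝓛^right_{j,j′}`. -/
def LRightPair (R : HSR) (Lj Lj' : HSeg) : Set Elem :=
  {x | x ∈ R.elems ∧ Elem.carrier x ⊆ regionA (diagMeet Lj.l Lj'.l)}

/-- `𝓛^left_{i,i′}`. -/
def LLeftPair (R : HSR) (Li Li' : HSeg) : Set Elem :=
  {x | x ∈ R.elems ∧ Elem.carrier x ⊆ regionB (diagMeet Li.r Li'.r)}

/-- `𝓛^right_q`. -/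
def LRightQ (R : HSR) (Lq : HSeg) : Set Elem :=
  {x | x ∈ R.elems ∧ ∀ p ∈ Elem.carrier x, p.2 - p.1 ≤ Lq.l.2 - Lq.l.1}

/-- The set of elements corresponding to a set of segments. -/
def segSet (Z : Set HSeg) : Set Elem := Elem.seg '' Z

/-- `(L_i, L_{i'})` is an end-pair of `S`. -/
def IsEndPair (R : HSR) (S : Set Elem) (Li Li' : HSeg) : Prop :=
  RightCrossing Li Li' ∧ Elem.seg Li ∈ S ∧ Elem.seg Li' ∈ S ∧ S ⊆ LLeftPair R Li Li'

/-- `(L_j, L_{j'})` is a start-pair of `S`. -/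
def IsStartPair (R : HSR) (S : Set Elem) (Lj Lj' : HSeg) : Prop :=
  LeftCrossing Lj Lj' ∧ Elem.seg Lj ∈ S ∧ Elem.seg Lj' ∈ S ∧ S ⊆ LRightPair R Lj Lj'

/-- `L_q` is a diagonally leftmost segment of `S`. -/
def IsDiagLeftmost (R : HSR) (S : Set Elem) (Lq : HSeg) : Prop :=
  ∃ Lj, Elem.seg Lj ∈ S ∧ IsStartPair R S Lj Lq

/-- The region `R(a,b)`. -/
def regionR (a b : Pt) : Set Pt :=
  {p : Pt | p.1 < b.1 ∧ b.2 - b.1 ≤ p.2 - p.1 ∧ p.2 - p.1 ≤ a.2 - a.1}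

/-- The set `X(a,b)` of elements entirely contained in `R(a,b)`. -/
def Xab (R : HSR) (a b : Pt) : Set Elem :=
  {x | x ∈ R.elems ∧ Elem.carrier x ⊆ regionR a b}

/-- A `BD(a,b,q,i,i′)`-instance. -/
def BDInstance (R : HSR) (a b : Pt) (Lq Li Li' : HSeg) : Prop :=
  Lq ∈ R.Ls ∧ Li ∈ R.Ls ∧ Li' ∈ R.Ls ∧ RightCrossing Li Li' ∧
    Elem.seg Lq ∈ LLeftPair R Li Li' ∧ Elem.seg Li ∈ LRightQ R Lq ∧
    Elem.seg Li' ∈ LRightQ R Lq ∧ b.1 ≤ Li.r.1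

/-- A `BD(a,b,q,i,i′)`-solution: a set `Z ⊆ 𝓛` dominating `X(a,b)`, with `(L_i,L_{i'})`
as an end-pair and `L_q` as a diagonally leftmost segment. -/
def BDSolution (R : HSR) (a b : Pt) (Lq Li Li' : HSeg) (Z : Set HSeg) : Prop :=
  Z ⊆ R.Ls ∧ Dominates (segSet Z) (Xab R a b) ∧
    IsEndPair R (segSet Z) Li Li' ∧ IsDiagLeftmost R (segSet Z) Lq

/-- A minimum-cardinality `BD(a,b,q,i,i′)`-solution. -/
def IsMinBDSolution (R : HSR) (a b : Pt) (Lq Li Li' : HSeg) (Z : Set HSeg) : Prop :=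
  BDSolution R a b Lq Li Li' Z ∧
    ∀ Z' : Set HSeg, BDSolution R a b Lq Li Li' Z' → Z.ncard ≤ Z'.ncard

/-- An admissible tuple `(c, L_{q′}, L_j, L_{j′})` for the `BD(a,b,q,i,i′)` recursion. -/
def AdmissibleTuple (R : HSR) (a b : Pt) (Lq Li Li' : HSeg)
    (c : Pt) (Lq' Lj Lj' : HSeg) : Prop :=
  (Elem.seg Lq' ∈ LRightQ R Lq ∧ Elem.seg Lq' ∈ LLeftPair R Li Li' ∧ Lq' ≠ Li) ∧
  (RightCrossing Lj Lj' ∧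
    (Elem.seg Lj ∈ LRightQ R Lq ∧ Elem.seg Lj ∈ LLeftPair R Li Li' ∧ Lj ≠ Li) ∧
    (Elem.seg Lj' ∈ LRightQ R Lq ∧ Elem.seg Lj' ∈ LLeftPair R Li Li' ∧ Lj' ≠ Li) ∧
    (Li ≠ Li' → Lj' = Li')) ∧
  (Elem.seg Lq' ∈ LLeftPair R Lj Lj' ∧
    Elem.seg Lj ∈ LRightQ R Lq' ∧ Elem.seg Lj' ∈ LRightQ R Lq') ∧
  ((Lj.r.1 ≤ b.1 → c = diagMeet Lj.r b) ∧ (¬ Lj.r.1 ≤ b.1 → c = b)) ∧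
  Dominates (segSet {Lj, Lj'}) (Xab R a b \ Xab R a c)


namespace HSeg

lemma l_mem (L : HSeg) : L.l ∈ L.carrier := left_mem_segment ℝ _ _
lemma r_mem (L : HSeg) : L.r ∈ L.carrier := right_mem_segment ℝ _ _

lemma carrier_bounds {L : HSeg} {p : Pt} (hp : p ∈ L.carrier) :
    p.2 = L.r.2 ∧ L.l.1 ≤ p.1 ∧ p.1 ≤ L.r.1 := by
  obtain ⟨u, v, hu, hv, huv, rfl⟩ := hp
  have hh := L.horiz
  have hle := L.le
  have h1 : (u • L.l + v • L.r).1 = u * L.l.1 + v * L.r.1 := rfl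
  have h2 : (u • L.l + v • L.r).2 = u * L.l.2 + v * L.r.2 := rfl
  refine ⟨?_, ?_, ?_⟩
  · rw [h2, hh]; linear_combination L.r.2 * huv
  · rw [h1]
    have hueq : u = 1 - v := by linarith
    subst hueq
    nlinarith [mul_nonneg hv (sub_nonneg.2 hle)]
  · rw [h1]
    have hueq : u = 1 - v := by linarith
    subst hueq
    nlinarith [mul_nonneg hv (sub_nonneg.2 hle)]

lemma snd_eq {L : HSeg} {p : Pt} (hp : p ∈ L.carrier) : p.2 = L.r.2 := (carrier_bounds hp).1

lemma diag_ge_r {L : HSeg} {p : Pt} (hp : p ∈ L.carrier) : L.r.2 - L.r.1 ≤ p.2 - p.1 := by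
  obtain ⟨h2, h3, h4⟩ := carrier_bounds hp; linarith

lemma diag_le_l {L : HSeg} {p : Pt} (hp : p ∈ L.carrier) : p.2 - p.1 ≤ L.l.2 - L.l.1 := by
  obtain ⟨h2, h3, h4⟩ := carrier_bounds hp
  have := L.horiz; linarith

lemma mem_of {L : HSeg} {t : ℝ} (h1 : L.l.1 ≤ t) (h2 : t ≤ L.r.1) :
    ((t, L.r.2) : Pt) ∈ L.carrier := by
  rcases eq_or_lt_of_le L.le with heq | hlt
  · have ht : t = L.r.1 := le_antisymm h2 (by linarith)
    rw [ht]
    exact Prod.mk.eta ▸ L.r_mem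
  · have hd : 0 < L.r.1 - L.l.1 := by linarith
    set s := (t - L.l.1) / (L.r.1 - L.l.1) with hs
    have hs0 : 0 ≤ s := div_nonneg (by linarith) hd.le
    have hs1 : s ≤ 1 := by rw [hs, div_le_one hd]; linarith
    have hmul : s * (L.r.1 - L.l.1) = t - L.l.1 := div_mul_cancel₀ _ hd.ne'
    refine ⟨1 - s, s, by linarith, hs0, by ring, ?_⟩
    have hcalc : ((1 - s) • L.l + s • L.r) = (((1-s) * L.l.1 + s * L.r.1 : ℝ),
        ((1-s) * L.l.2 + s * L.r.2 : ℝ)) := rfl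
    rw [hcalc, Prod.ext_iff]
    constructor
    · simp only
      linear_combination hmul
    · simp only
      rw [L.horiz]; ring

end HSeg

lemma mem_setShadow {C : Set Pt} {p : Pt} :
    p ∈ setShadow C ↔ ∃ t ∈ C, p.1 ≤ t.1 ∧ p.2 - p.1 ≤ t.2 - t.1 := by
  simp only [setShadow, Set.mem_iUnion₂, ptShadow, Set.mem_setOf_eq, exists_prop]

lemma mem_setRevShadow {C : Set Pt} {p : Pt} :
    p ∈ setRevShadow C ↔ ∃ t ∈ C, t.1 ≤ p.1 ∧ t.2 - t.1 ≤ p.2 - p.1 := by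
  simp only [setRevShadow, Set.mem_iUnion₂, ptRevShadow, Set.mem_setOf_eq, exists_prop]

lemma mem_segSet {Z : Set HSeg} {L : HSeg} : Elem.seg L ∈ segSet Z ↔ L ∈ Z := by
  simp [segSet]

lemma segSet_mono {Z Z' : Set HSeg} (h : Z ⊆ Z') : segSet Z ⊆ segSet Z' :=
  Set.image_mono h

lemma dominatedBy_mono {D D' : Set Elem} {x : Elem} (h : D ⊆ D') :
    DominatedBy D x → DominatedBy D' x := by
  rintro (h1 | ⟨d, hd, hadj⟩)
  · exact Or.inl (h h1)
  · exact Or.inr ⟨d, h hd, hadj⟩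

lemma seg_mem_elems {R : HSR} {L : HSeg} (h : L ∈ R.Ls) : Elem.seg L ∈ R.elems :=
  Or.inr ⟨L, h, rfl⟩

lemma r_mem_keyPts {R : HSR} {L : HSeg} (h : L ∈ R.Ls) : L.r ∈ R.keyPts :=
  Or.inr (Set.mem_biUnion h (by simp))


lemma union_solution (R : HSR) (a b : Pt) (Lq Li Li' : HSeg)
    (hinst : BDInstance R a b Lq Li Li')
    (c : Pt) (Lq' Lj Lj' : HSeg)
    (hadm : AdmissibleTuple R a b Lq Li Li' c Lq' Lj Lj')
    (W : Set HSeg) (hW : BDSolution R a c Lq' Lj Lj' W) :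
    BDSolution R a b Lq Li Li' (({Lq, Li} : Set HSeg) ∪ W) := by
  obtain ⟨hLqLs, hLiLs, hLi'Ls, hRCii, hLqLL, hLiRQ, hLi'RQ, hb1⟩ := hinst
  obtain ⟨⟨hq'RQ, hq'LL, hq'ne⟩, ⟨hRCjj, ⟨hjRQ, hjLL, hjne⟩, ⟨hj'RQ, hj'LL, hj'ne⟩, hforced⟩,
    ⟨hq'LLjj, hjRQq', hj'RQq'⟩, hc4, hdom5⟩ := hadm
  obtain ⟨hWsub, hWdom, ⟨hWRC, hWjmem, hWj'mem, hWLL⟩,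
    Lj0w, hLj0wmem, hLCw, hLj0in, hLq'in, hWRP⟩ := hW
  have hmemU : ∀ z : HSeg, z ∈ (({Lq, Li} : Set HSeg) ∪ W) → z = Lq ∨ z = Li ∨ z ∈ W := by
    intro z hz
    simpa [Set.mem_union, Set.mem_insert_iff, or_assoc] using hz
  have hLqU : Lq ∈ (({Lq, Li} : Set HSeg) ∪ W) :=
    Set.mem_union_left _ (Set.mem_insert _ _)
  have hLiU : Li ∈ (({Lq, Li} : Set HSeg) ∪ W) :=
    Set.mem_union_left _ (Set.mem_insert_of_mem _ rfl)
  have hUls : (({Lq, Li} : Set HSeg) ∪ W) ⊆ R.Ls := by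
    intro z hz
    rcases hmemU z hz with rfl | rfl | hz'
    · exact hLqLs
    · exact hLiLs
    · exact hWsub hz'
  have hdiagU : ∀ z ∈ (({Lq, Li} : Set HSeg) ∪ W), ∀ p ∈ z.carrier,
      p.2 - p.1 ≤ Lq.l.2 - Lq.l.1 := by
    intro z hz p hp
    rcases hmemU z hz with rfl | rfl | hz'
    · exact HSeg.diag_le_l hp
    · exact hLiRQ.2 p hp
    · have h1 : p.2 - p.1 ≤ Lq'.l.2 - Lq'.l.1 := by
        have h := (hWRP (Set.mem_image_of_mem _ hz')).2 hp
        simp only [regionA, diagMeet, Set.mem_setOf_eq] at h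
        linarith [h.2]
      have h2 : Lq'.l.2 - Lq'.l.1 ≤ Lq.l.2 - Lq.l.1 := hq'RQ.2 Lq'.l (HSeg.l_mem Lq')
      linarith
  refine ⟨hUls, ?_, ?_, ?_⟩
  · -- dominates X(a,b)
    intro x hx
    by_cases hxc : Elem.carrier x ⊆ regionR a c
    · exact dominatedBy_mono (segSet_mono Set.subset_union_right) (hWdom x ⟨hx.1, hxc⟩)
    · have hx5 := hdom5 x ⟨hx, fun hmem => hxc hmem.2⟩
      refine dominatedBy_mono (segSet_mono ?_) hx5
      intro z hz
      have hz' : z = Lj ∨ z = Lj' := by simpa using hz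
      rcases hz' with rfl | rfl
      · exact Set.mem_union_right _ (mem_segSet.1 hWjmem)
      · exact Set.mem_union_right _ (mem_segSet.1 hWj'mem)
  · -- end pair
    refine ⟨hRCii, mem_segSet.2 hLiU, ?_, ?_⟩
    · by_cases hii : Li = Li'
      · exact mem_segSet.2 (by rw [← hii]; exact hLiU)
      · exact mem_segSet.2 (Set.mem_union_right _ (by rw [← hforced hii]; exact mem_segSet.1 hWj'mem))
    · rintro x ⟨z, hz, rfl⟩
      refine ⟨seg_mem_elems (hUls hz), ?_⟩
      intro p hp
      rcases hmemU z hz with rfl | rfl | hz'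
      · exact hLqLL.2 hp
      · simp only [regionB, diagMeet, Set.mem_setOf_eq]
        have h1 := HSeg.carrier_bounds hp
        have h2 := HSeg.diag_ge_r hp
        have h3 := hRCii.2
        exact ⟨h1.2.2, by linarith⟩
      · have h := (hWLL (Set.mem_image_of_mem _ hz')).2 hp
        simp only [regionB, diagMeet, Set.mem_setOf_eq] at h ⊢
        have hj1 := hjLL.2 (HSeg.r_mem Lj)
        have hj2 := hj'LL.2 (HSeg.r_mem Lj')
        simp only [regionB, diagMeet, Set.mem_setOf_eq] at hj1 hj2
        exact ⟨by linarith [h.1, hj1.1], by linarith [h.2, hj2.2]⟩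
  · -- diagonally leftmost
    have hfinU : (({Lq, Li} : Set HSeg) ∪ W).Finite := R.finL.subset hUls
    obtain ⟨Lm, hLmU, hLmmin⟩ :=
      Set.exists_min_image _ (fun z : HSeg => z.l.1) hfinU ⟨Lq, hLqU⟩
    refine ⟨Lm, mem_segSet.2 hLmU, ?_, mem_segSet.2 hLmU, mem_segSet.2 hLqU, ?_⟩
    · exact ⟨hLmmin Lq hLqU, hdiagU Lm hLmU Lm.l (HSeg.l_mem Lm)⟩
    · rintro x ⟨z, hz, rfl⟩
      refine ⟨seg_mem_elems (hUls hz), ?_⟩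
      intro p hp
      simp only [regionA, diagMeet, Set.mem_setOf_eq]
      have h1 := HSeg.carrier_bounds hp
      have h2 := hdiagU z hz p hp
      exact ⟨le_trans (hLmmin z hz) h1.2.1, by linarith⟩


lemma elemAdj_pt_seg {p : Pt} {L : HSeg} :
    ElemAdj (Elem.pt p) (Elem.seg L) ↔ p ∈ setShadow L.carrier := Iff.rfl

lemma elemAdj_seg_seg {L L' : HSeg} :
    ElemAdj (Elem.seg L) (Elem.seg L') ↔
      (L.carrier ∩ setShadow L'.carrier).Nonempty ∨
      (L'.carrier ∩ setShadow L.carrier).Nonempty := Iff.rfl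

theorem stmt7_aux (R : HSR) (hgp : GenPos R) (a b : Pt) (Lq Li Li' : HSeg)
    (hinst : BDInstance R a b Lq Li Li')
    (hex : ∃ Z : Set HSeg, BDSolution R a b Lq Li Li' Z)
    (hndom : ¬ Dominates (segSet {Lq, Li, Li'}) (Xab R a b))
    (hRab : ¬ regionR a b ⊆ setShadow Li.carrier)
    (hb : b ∉ ptShadow Li.l)
    (hmin0 : ∃ Z₀ : Set HSeg, IsMinBDSolution R a b Lq Li Li' Z₀ ∧
      Dominates (segSet (Z₀ \ {Li}))
        {x ∈ Xab R a b |
          (Elem.carrier x ∩ (setShadow Li.carrier ∪ setRevShadow Li.carrier)).Nonempty}) :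
    ∀ Z₀ : Set HSeg, IsMinBDSolution R a b Lq Li Li' Z₀ →
      ((∀ (c : Pt) (Lq' Lj Lj' : HSeg), AdmissibleTuple R a b Lq Li Li' c Lq' Lj Lj' →
          ∀ Z' : Set HSeg, IsMinBDSolution R a c Lq' Lj Lj' Z' →
            Z₀.ncard ≤ (({Lq, Li} : Set HSeg) ∪ Z').ncard) ∧
        (∃ (c : Pt) (Lq' Lj Lj' : HSeg), AdmissibleTuple R a b Lq Li Li' c Lq' Lj Lj' ∧
          ∃ Z' : Set HSeg, IsMinBDSolution R a c Lq' Lj Lj' Z' ∧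
            Z₀.ncard = (({Lq, Li} : Set HSeg) ∪ Z').ncard)) := by
  intro Z₀ hZ₀min
  obtain ⟨Zs, hZsmin0, hZsprop⟩ := hmin0
  have hZssol' := hZsmin0.1
  have hZsmin := hZsmin0.2
  obtain ⟨hssub, hsdom, ⟨hRCii', hLiin, hLi'in, hLLii⟩,
    Lj0s, hLj0smem, hLCs, hLj0sin, hLqin, hRPs⟩ := hZsmin0.1
  have hLiZs : Li ∈ Zs := mem_segSet.1 hLiin
  have hLi'Zs : Li' ∈ Zs := mem_segSet.1 hLi'in
  have hLqZs : Lq ∈ Zs := mem_segSet.1 hLqin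
  have hfinZs : Zs.Finite := R.finL.subset hssub
  set Z' : Set HSeg := Zs \ {Li} with hZ'def
  have hZ'sub : Z' ⊆ Zs := Set.diff_subset
  have hZ'Ls : Z' ⊆ R.Ls := fun z hz => hssub hz.1
  have hZ'ne : ∀ z ∈ Z', z ≠ Li := fun z hz => by simpa using hz.2
  have hZsLL : ∀ z ∈ Zs, Elem.seg z ∈ LLeftPair R Li Li' := fun z hz => hLLii ⟨z, hz, rfl⟩
  have hZsRQ : ∀ z ∈ Zs, Elem.seg z ∈ LRightQ R Lq := by
    intro z hz
    refine ⟨seg_mem_elems (hssub hz), ?_⟩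
    intro p hp
    have h := (hRPs ⟨z, hz, rfl⟩).2 hp
    simp only [regionA, diagMeet, Set.mem_setOf_eq] at h
    linarith [h.2]
  -- Z' dominates X(a,b)
  have hZ'dom : Dominates (segSet Z') (Xab R a b) := by
    intro x hx
    by_cases hS : (Elem.carrier x ∩ (setShadow Li.carrier ∪ setRevShadow Li.carrier)).Nonempty
    · exact hZsprop x ⟨hx, hS⟩
    · rcases hsdom x hx with hmem | ⟨d, hd, hadj⟩
      · obtain ⟨w, hwZs, rfl⟩ := hmem
        by_cases hwLi : w = Li
        · subst hwLi
          exact absurd ⟨w.l, HSeg.l_mem w,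
            Or.inl (mem_setShadow.2 ⟨w.l, HSeg.l_mem w, le_refl _, le_refl _⟩)⟩ hS
        · exact Or.inl ⟨w, ⟨hwZs, by simpa using hwLi⟩, rfl⟩
      · obtain ⟨w, hwZs, rfl⟩ := hd
        by_cases hwLi : w = Li
        · subst hwLi
          exfalso
          cases x with
          | pt u =>
            exact hS ⟨u, Set.mem_singleton u, Or.inl (elemAdj_pt_seg.1 hadj)⟩
          | seg y =>
            rcases elemAdj_seg_seg.1 hadj with ⟨u, huy, hush⟩ | ⟨t, htw, htsh⟩
            · exact hS ⟨u, huy, Or.inl hush⟩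
            · obtain ⟨pp, hppy, h1, h2⟩ := mem_setShadow.1 htsh
              exact hS ⟨pp, hppy, Or.inr (mem_setRevShadow.2 ⟨t, htw, h1, h2⟩)⟩
        · exact Or.inr ⟨Elem.seg w, ⟨w, ⟨hwZs, by simpa using hwLi⟩, rfl⟩, hadj⟩
  -- Z' is nonempty
  obtain ⟨x0, hx0X, -⟩ : ∃ x ∈ Xab R a b, ¬ DominatedBy (segSet {Lq, Li, Li'}) x := by
    unfold Dominates at hndom
    push_neg at hndom
    exact hndom
  have hZ'nonempty : Z'.Nonempty := by
    rcases hZ'dom x0 hx0X with hmem | ⟨d, hd, -⟩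
    · obtain ⟨w, hw, -⟩ := hmem; exact ⟨w, hw⟩
    · obtain ⟨w, hw, -⟩ := hd; exact ⟨w, hw⟩
  have hfinZ' : Z'.Finite := hfinZs.subset hZ'sub
  -- extrema
  obtain ⟨Lj, hLjZ', hLjmax⟩ :=
    Set.exists_max_image Z' (fun z : HSeg => z.r.1) hfinZ' hZ'nonempty
  obtain ⟨Lq', hLq'Z', hLq'max⟩ :=
    Set.exists_max_image Z' (fun z : HSeg => z.l.2 - z.l.1) hfinZ' hZ'nonempty
  obtain ⟨Lj0, hLj0Z', hLj0min⟩ :=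
    Set.exists_min_image Z' (fun z : HSeg => z.l.1) hfinZ' hZ'nonempty
  obtain ⟨Lj', hLj'Z', hLj'min, hLj'forced⟩ :
      ∃ Lj', Lj' ∈ Z' ∧ (∀ z ∈ Z', Lj'.r.2 - Lj'.r.1 ≤ z.r.2 - z.r.1) ∧
        (Li ≠ Li' → Lj' = Li') := by
    by_cases hii : Li = Li'
    · obtain ⟨L, hL, hLmin⟩ :=
        Set.exists_min_image Z' (fun z : HSeg => z.r.2 - z.r.1) hfinZ' hZ'nonempty
      exact ⟨L, hL, hLmin, fun h => absurd hii h⟩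
    · refine ⟨Li', ⟨hLi'Zs, fun hmem => hii ((Set.mem_singleton_iff.1 hmem).symm)⟩,
        ?_, fun _ => rfl⟩
      intro z hz
      have h := (hZsLL z (hZ'sub hz)).2 (HSeg.r_mem z)
      simp only [regionB, diagMeet, Set.mem_setOf_eq] at h
      linarith [h.2]
  -- end pair and start pair of Z'
  have hZ'end : IsEndPair R (segSet Z') Lj Lj' := by
    refine ⟨⟨hLjmax Lj' hLj'Z', hLj'min Lj hLjZ'⟩, mem_segSet.2 hLjZ', mem_segSet.2 hLj'Z', ?_⟩
    rintro x ⟨z, hz, rfl⟩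
    refine ⟨seg_mem_elems (hZ'Ls hz), ?_⟩
    intro p hp
    simp only [regionB, diagMeet, Set.mem_setOf_eq]
    have h1 := HSeg.carrier_bounds hp
    have h2 := HSeg.diag_ge_r hp
    have h3 := hLjmax z hz
    have h4 := hLj'min z hz
    exact ⟨by linarith [h1.2.2], by linarith⟩
  have hZ'start : IsStartPair R (segSet Z') Lj0 Lq' := by
    refine ⟨⟨hLj0min Lq' hLq'Z', hLq'max Lj0 hLj0Z'⟩, mem_segSet.2 hLj0Z',
      mem_segSet.2 hLq'Z', ?_⟩
    rintro x ⟨z, hz, rfl⟩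
    refine ⟨seg_mem_elems (hZ'Ls hz), ?_⟩
    intro p hp
    simp only [regionA, diagMeet, Set.mem_setOf_eq]
    have h1 := HSeg.carrier_bounds hp
    have h2 := HSeg.diag_le_l hp
    exact ⟨le_trans (hLj0min z hz) h1.2.1, by linarith [hLq'max z hz]⟩
  -- admissibility components
  have hadm1 : Elem.seg Lq' ∈ LRightQ R Lq ∧ Elem.seg Lq' ∈ LLeftPair R Li Li' ∧ Lq' ≠ Li :=
    ⟨hZsRQ Lq' (hZ'sub hLq'Z'), hZsLL Lq' (hZ'sub hLq'Z'), hZ'ne Lq' hLq'Z'⟩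
  have hadmj : Elem.seg Lj ∈ LRightQ R Lq ∧ Elem.seg Lj ∈ LLeftPair R Li Li' ∧ Lj ≠ Li :=
    ⟨hZsRQ Lj (hZ'sub hLjZ'), hZsLL Lj (hZ'sub hLjZ'), hZ'ne Lj hLjZ'⟩
  have hadmj' : Elem.seg Lj' ∈ LRightQ R Lq ∧ Elem.seg Lj' ∈ LLeftPair R Li Li' ∧ Lj' ≠ Li :=
    ⟨hZsRQ Lj' (hZ'sub hLj'Z'), hZsLL Lj' (hZ'sub hLj'Z'), hZ'ne Lj' hLj'Z'⟩
  have hadm3 : Elem.seg Lq' ∈ LLeftPair R Lj Lj' := hZ'end.2.2.2 ⟨Lq', hLq'Z', rfl⟩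
  have hadm3j : Elem.seg Lj ∈ LRightQ R Lq' := by
    refine ⟨seg_mem_elems (hZ'Ls hLjZ'), ?_⟩
    intro p hp
    have := HSeg.diag_le_l hp
    linarith [hLq'max Lj hLjZ']
  have hadm3j' : Elem.seg Lj' ∈ LRightQ R Lq' := by
    refine ⟨seg_mem_elems (hZ'Ls hLj'Z'), ?_⟩
    intro p hp
    have := HSeg.diag_le_l hp
    linarith [hLq'max Lj' hLj'Z']
  -- the tuple
  have hkey : ∃ c, AdmissibleTuple R a b Lq Li Li' c Lq' Lj Lj' ∧
      BDSolution R a c Lq' Lj Lj' Z' := by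
    rcases le_or_gt Lj.r.1 b.1 with hc1 | hc2
    · -- c = diagMeet Lj.r b
      have hXsub : Xab R a (diagMeet Lj.r b) ⊆ Xab R a b := by
        rintro x ⟨hxe, hxc⟩
        refine ⟨hxe, fun p hp => ?_⟩
        have h := hxc hp
        simp only [regionR, diagMeet, Set.mem_setOf_eq] at h ⊢
        exact ⟨by linarith [h.1], by linarith [h.2.1], h.2.2⟩
      have hdom5 : Dominates (segSet {Lj, Lj'}) (Xab R a b \ Xab R a (diagMeet Lj.r b)) := by
        rintro x ⟨hxab, hxnc⟩
        have hxe := hxab.1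
        have hpex : ∃ p ∈ Elem.carrier x, Lj.r.1 ≤ p.1 := by
          by_contra hcon
          push_neg at hcon
          refine hxnc ⟨hxe, fun p hp => ?_⟩
          have h := hxab.2 hp
          simp only [regionR, diagMeet, Set.mem_setOf_eq] at h ⊢
          exact ⟨hcon p hp, by linarith [h.2.1], h.2.2⟩
        obtain ⟨p, hpx, hp1⟩ := hpex
        cases x with
        | pt u =>
          obtain rfl : p = u := Set.mem_singleton_iff.1 hpx
          rcases hZ'dom (Elem.pt p) hxab with hmem | ⟨d, hd, hadj⟩
          · obtain ⟨w, -, hw⟩ := hmem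
            exact absurd hw (by simp)
          · obtain ⟨w, hwZ', rfl⟩ := hd
            obtain ⟨t, htw, ht1, ht2⟩ := mem_setShadow.1 (elemAdj_pt_seg.1 hadj)
            have hbnd := HSeg.carrier_bounds htw
            have hw1 : w.r.1 ≤ Lj.r.1 := hLjmax w hwZ'
            have ht1' : t.1 = w.r.1 := by linarith [hbnd.2.2]
            have hteq : t = w.r := Prod.ext_iff.2 ⟨ht1', hbnd.1⟩
            have hwr : w.r = Lj.r := by
              by_contra hne
              exact (hgp w.r (r_mem_keyPts (hZ'Ls hwZ')) Lj.r
                (r_mem_keyPts (hZ'Ls hLjZ')) hne).1 (by linarith)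
            rw [hteq, hwr] at ht1 ht2
            refine Or.inr ⟨Elem.seg Lj, mem_segSet.2 (Set.mem_insert _ _), ?_⟩
            exact elemAdj_pt_seg.2 (mem_setShadow.2 ⟨Lj.r, HSeg.r_mem Lj, ht1, ht2⟩)
        | seg y =>
          have hyr : Lj.r.1 ≤ y.r.1 := le_trans hp1 (HSeg.carrier_bounds hpx).2.2
          by_cases hyl : y.l.1 ≤ Lj.r.1
          · have hps : ((Lj.r.1, y.r.2) : Pt) ∈ y.carrier := HSeg.mem_of hyl hyr
            rcases le_total (y.r.2 - Lj.r.1) (Lj.r.2 - Lj.r.1) with hcmp | hcmp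
            · refine Or.inr ⟨Elem.seg Lj, mem_segSet.2 (Set.mem_insert _ _),
                elemAdj_seg_seg.2 (Or.inl ⟨(Lj.r.1, y.r.2), hps, ?_⟩)⟩
              exact mem_setShadow.2 ⟨Lj.r, HSeg.r_mem Lj, le_refl _, hcmp⟩
            · refine Or.inr ⟨Elem.seg Lj, mem_segSet.2 (Set.mem_insert _ _),
                elemAdj_seg_seg.2 (Or.inr ⟨Lj.r, HSeg.r_mem Lj, ?_⟩)⟩
              exact mem_setShadow.2 ⟨(Lj.r.1, y.r.2), hps, le_refl _, hcmp⟩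
          · push_neg at hyl
            rcases hZ'dom (Elem.seg y) hxab with hmem | ⟨d, hd, hadj⟩
            · obtain ⟨w, hwZ', hw⟩ := hmem
              have hwy : w = y := by injection hw
              exfalso
              have h1 := hLjmax w hwZ'
              rw [hwy] at h1
              linarith [y.le]
            · obtain ⟨w, hwZ', rfl⟩ := hd
              rcases elemAdj_seg_seg.1 hadj with ⟨u, huy, hush⟩ | ⟨t, htw, htsh⟩
              · obtain ⟨t, htw, ht1, -⟩ := mem_setShadow.1 hush
                exfalso
                have h1 := (HSeg.carrier_bounds huy).2.1
                have h2 := (HSeg.carrier_bounds htw).2.2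
                linarith [hLjmax w hwZ']
              · obtain ⟨pp, hppy, -, hd2⟩ := mem_setShadow.1 htsh
                refine Or.inr ⟨Elem.seg Lj', mem_segSet.2 (Set.mem_insert_of_mem _ rfl),
                  elemAdj_seg_seg.2 (Or.inr ⟨Lj'.r, HSeg.r_mem Lj', ?_⟩)⟩
                refine mem_setShadow.2 ⟨y.l, HSeg.l_mem y, ?_, ?_⟩
                · linarith [hLjmax Lj' hLj'Z']
                · have hd3 := HSeg.diag_ge_r htw
                  have hd4 := HSeg.diag_le_l hppy
                  linarith [hLj'min w hwZ']
      exact ⟨diagMeet Lj.r b,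
        ⟨hadm1, ⟨hZ'end.1, hadmj, hadmj', hLj'forced⟩, ⟨hadm3, hadm3j, hadm3j'⟩,
          ⟨fun _ => rfl, fun h => absurd hc1 h⟩, hdom5⟩,
        hZ'Ls, fun x hx => hZ'dom x (hXsub hx), hZ'end, Lj0, mem_segSet.2 hLj0Z', hZ'start⟩
    · exact ⟨b,
        ⟨hadm1, ⟨hZ'end.1, hadmj, hadmj', hLj'forced⟩, ⟨hadm3, hadm3j, hadm3j'⟩,
          ⟨fun h => absurd h (not_le.2 hc2), fun _ => rfl⟩,
          fun x hx => absurd hx.1 hx.2⟩,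
        hZ'Ls, hZ'dom, hZ'end, Lj0, mem_segSet.2 hLj0Z', hZ'start⟩
  obtain ⟨c, hadm, hZ'sol⟩ := hkey
  have hZcard : Z₀.ncard = Zs.ncard :=
    le_antisymm (hZ₀min.2 Zs hZssol') (hZsmin Z₀ hZ₀min.1)
  constructor
  · intro c0 Lq0 Lj0' Lj0'' hadm0 W hWmin
    exact hZ₀min.2 _ (union_solution R a b Lq Li Li' hinst c0 Lq0 Lj0' Lj0'' hadm0 W hWmin.1)
  · have hNne : {n | ∃ W, BDSolution R a c Lq' Lj Lj' W ∧ W.ncard = n}.Nonempty :=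
      ⟨Z'.ncard, Z', hZ'sol, rfl⟩
    obtain ⟨W₀, hW₀sol, hW₀card⟩ := Nat.sInf_mem hNne
    have hW₀min : IsMinBDSolution R a c Lq' Lj Lj' W₀ := by
      refine ⟨hW₀sol, fun W hW => ?_⟩
      rw [hW₀card]
      exact Nat.sInf_le ⟨W, hW, rfl⟩
    have hW₀le : W₀.ncard ≤ Z'.ncard := by
      rw [hW₀card]
      exact Nat.sInf_le ⟨Z', hZ'sol, rfl⟩
    have hZ'card : Z'.ncard + 1 = Zs.ncard := by
      rw [hZ'def]
      exact Set.ncard_diff_singleton_add_one hLiZs hfinZs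
    by_cases hWZ : W₀.ncard = Z'.ncard
    · have hZ'min : IsMinBDSolution R a c Lq' Lj Lj' Z' := by
        refine ⟨hZ'sol, fun W hW => ?_⟩
        rw [← hWZ, hW₀card]
        exact Nat.sInf_le ⟨W, hW, rfl⟩
      refine ⟨c, Lq', Lj, Lj', hadm, Z', hZ'min, ?_⟩
      have hset : ({Lq, Li} : Set HSeg) ∪ Z' = Zs := by
        ext w
        simp only [Set.mem_union, Set.mem_insert_iff, Set.mem_singleton_iff, hZ'def,
          Set.mem_diff]
        constructor
        · rintro ((rfl | rfl) | ⟨hw, -⟩)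
          · exact hLqZs
          · exact hLiZs
          · exact hw
        · intro hw
          by_cases hwi : w = Li
          · exact Or.inl (Or.inr hwi)
          · exact Or.inr ⟨hw, hwi⟩
      rw [hset, hZcard]
    · have hWlt : W₀.ncard < Z'.ncard := lt_of_le_of_ne hW₀le hWZ
      refine ⟨c, Lq', Lj, Lj', hadm, W₀, hW₀min, ?_⟩
      have hle1 : Z₀.ncard ≤ (({Lq, Li} : Set HSeg) ∪ W₀).ncard :=
        hZ₀min.2 _ (union_solution R a b Lq Li Li' hinst c Lq' Lj Lj' hadm W₀ hW₀sol)
      have hle2 : (({Lq, Li} : Set HSeg) ∪ W₀).ncard ≤ Z₀.ncard := by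
        have h1 := Set.ncard_union_le ({Lq, Li} : Set HSeg) W₀
        have h2 : ({Lq, Li} : Set HSeg).ncard ≤ 2 := by
          refine le_trans (Set.ncard_insert_le _ _) ?_
          simp [Set.ncard_singleton]
        omega
      exact le_antisymm hle1 hle2


/-- The recursion of Lemma `bounded-dom-correctness-lem-1`: the minimum
cardinality of a `BD(a,b,q,i,i′)`-solution equals the minimum over admissible tuples of
`|{L_q,L_i} ∪ Z′|` for minimum solutions `Z′` of the subinstance. -/
theorem stmt7 (R : HSR) (hgp : GenPos R) (a b : Pt) (Lq Li Li' : HSeg)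
    (hinst : BDInstance R a b Lq Li Li')
    (hex : ∃ Z : Set HSeg, BDSolution R a b Lq Li Li' Z)
    (hndom : ¬ Dominates (segSet {Lq, Li, Li'}) (Xab R a b))
    (hRab : ¬ regionR a b ⊆ setShadow Li.carrier)
    (hb : b ∉ ptShadow Li.l)
    (hmin0 : ∃ Z₀ : Set HSeg, IsMinBDSolution R a b Lq Li Li' Z₀ ∧
      Dominates (segSet (Z₀ \ {Li}))
        {x ∈ Xab R a b |
          (Elem.carrier x ∩ (setShadow Li.carrier ∪ setRevShadow Li.carrier)).Nonempty}) :
    ∀ Z₀ : Set HSeg, IsMinBDSolution R a b Lq Li Li' Z₀ →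
      ((∀ (c : Pt) (Lq' Lj Lj' : HSeg), AdmissibleTuple R a b Lq Li Li' c Lq' Lj Lj' →
          ∀ Z' : Set HSeg, IsMinBDSolution R a c Lq' Lj Lj' Z' →
            Z₀.ncard ≤ (({Lq, Li} : Set HSeg) ∪ Z').ncard) ∧
        (∃ (c : Pt) (Lq' Lj Lj' : HSeg), AdmissibleTuple R a b Lq Li Li' c Lq' Lj Lj' ∧
          ∃ Z' : Set HSeg, IsMinBDSolution R a c Lq' Lj Lj' Z' ∧
            Z₀.ncard = (({Lq, Li} : Set HSeg) ∪ Z').ncard)) := by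
  exact stmt7_aux R hgp a b Lq Li Li' hinst hex hndom hRab hb hmin0
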